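/- Fix a well order ≺ on a set Γ. Let S = { x ∈ {0,1}^Γ : ∀ i ≺ j, x_i ≤ x_j } (the set of {0,1}-valued ≺-increasing functions). Then the closed convex hull of S in [0,1]^Γ equals { x ∈ [0,1]^Γ : ∀ i ≺ j, x_i ≤ x_j }, the set of all [0,1]-valued ≺-increasing functions. -/

import Mathlib

open Set

private lemma key_lemma {Γ : Type*} [LinearOrder Γ] (n : ℕ) :
    ∀ (x : Γ → ℝ), (∀ i, x i ∈ Set.Icc (0:ℝ) 1) → (∀ i j : Γ, i < j → x i ≤ x j) →
    ∀ F : Finset Γ, ((F.image x).filter (fun v => v ≠ 0 ∧ v ≠ 1)).card ≤ n →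
    ∃ y ∈ convexHull ℝ
      {x : Γ → ℝ | (∀ i, x i = 0 ∨ x i = 1) ∧ ∀ i j : Γ, i < j → x i ≤ x j},
      ∀ i ∈ F, y i = x i := by
  induction n with
  | zero =>
    intro x hx hmono F hcard
    refine ⟨fun i => if 1 ≤ x i then 1 else 0, subset_convexHull ℝ _ ?_, ?_⟩
    · refine ⟨fun i => ?_, fun i j hij => ?_⟩
      · by_cases h : 1 ≤ x i <;> simp [h]
      · by_cases h : 1 ≤ x i
        · have : 1 ≤ x j := le_trans h (hmono i j hij)
          simp [h, this]
        · by_cases h' : 1 ≤ x j <;> simp [h, h']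
    · intro i hi
      have hfe : (F.image x).filter (fun v => v ≠ 0 ∧ v ≠ 1) = ∅ :=
        Finset.card_eq_zero.mp (Nat.le_zero.mp hcard)
      have hxi : ¬ (x i ≠ 0 ∧ x i ≠ 1) := by
        intro hc
        have : x i ∈ (F.image x).filter (fun v => v ≠ 0 ∧ v ≠ 1) := by
          simp only [Finset.mem_filter, Finset.mem_image]
          exact ⟨⟨i, hi, rfl⟩, hc⟩
        rw [hfe] at this
        exact absurd this (Finset.notMem_empty _)
      push_neg at hxi
      by_cases h0 : x i = 0
      · have : ¬ (1 : ℝ) ≤ x i := by rw [h0]; norm_num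
        simp [this, h0]
      · have h1 : x i = 1 := hxi h0
        have : (1 : ℝ) ≤ x i := by rw [h1]
        simp [this, h1]
  | succ n ih =>
    intro x hx hmono F hcard
    by_cases hle : ((F.image x).filter (fun v => v ≠ 0 ∧ v ≠ 1)).card ≤ n
    · exact ih x hx hmono F hle
    · set W := (F.image x).filter (fun v => v ≠ 0 ∧ v ≠ 1) with hW
      have hWne : W.Nonempty := by
        rw [← Finset.card_pos]
        omega
      set a := W.min' hWne with ha
      have haW : a ∈ W := W.min'_mem hWne
      obtain ⟨haim, ha0, ha1⟩ : a ∈ F.image x ∧ a ≠ 0 ∧ a ≠ 1 := by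
        simpa [hW, Finset.mem_filter] using haW
      obtain ⟨i₀, hi₀F, hi₀⟩ := Finset.mem_image.mp haim
      have haIcc : a ∈ Set.Icc (0:ℝ) 1 := hi₀ ▸ hx i₀
      have ha0' : 0 < a := lt_of_le_of_ne haIcc.1 (Ne.symm ha0)
      have ha1' : a < 1 := lt_of_le_of_ne haIcc.2 ha1
      have h1a : (0:ℝ) < 1 - a := by linarith
      -- values of x on F are either 0 or ≥ a
      have hmin : ∀ i ∈ F, x i = 0 ∨ a ≤ x i := by
        intro i hi
        by_cases h0 : x i = 0
        · exact Or.inl h0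
        · right
          by_cases h1 : x i = 1
          · rw [h1]; exact le_of_lt ha1'
          · exact W.min'_le _ (by
              simp only [hW, Finset.mem_filter, Finset.mem_image]
              exact ⟨⟨i, hi, rfl⟩, h0, h1⟩)
      -- the two pieces
      set u : Γ → ℝ := fun i => if a ≤ x i then 1 else 0 with hu
      set z : Γ → ℝ := fun i => (max (x i) a - a) / (1 - a) with hz
      have huS : u ∈ {x : Γ → ℝ | (∀ i, x i = 0 ∨ x i = 1) ∧
          ∀ i j : Γ, i < j → x i ≤ x j} := by
        refine ⟨fun i => ?_, fun i j hij => ?_⟩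
        · by_cases h : a ≤ x i <;> simp [hu, h]
        · by_cases h : a ≤ x i
          · have : a ≤ x j := le_trans h (hmono i j hij)
            simp [hu, h, this]
          · by_cases h' : a ≤ x j <;> simp [hu, h, h']
      have hzIcc : ∀ i, z i ∈ Set.Icc (0:ℝ) 1 := by
        intro i
        constructor
        · apply div_nonneg _ (le_of_lt h1a)
          have : a ≤ max (x i) a := le_max_right _ _
          linarith
        · rw [div_le_one h1a]
          have h1 : x i ≤ 1 := (hx i).2
          have h2 : a ≤ 1 := le_of_lt ha1'
          have : max (x i) a ≤ 1 := max_le h1 h2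
          linarith
      have hzmono : ∀ i j : Γ, i < j → z i ≤ z j := by
        intro i j hij
        have h := hmono i j hij
        have hm : max (x i) a ≤ max (x j) a := max_le_max h le_rfl
        simp only [hz]
        gcongr
      -- combination identity on F
      have hcomb : ∀ i ∈ F, a * u i + (1 - a) * z i = x i := by
        intro i hi
        rcases hmin i hi with h0 | hge
        · have hna : ¬ a ≤ x i := by rw [h0]; exact not_le.mpr ha0'
          have hmax : max (x i) a = a := max_eq_right (by rw [h0]; exact le_of_lt ha0')
          have hui : u i = 0 := if_neg hna
          have hzi : z i = 0 := by
            show (max (x i) a - a) / (1 - a) = 0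
            rw [hmax]; ring
          rw [hui, hzi, h0]; ring
        · have hmax : max (x i) a = x i := max_eq_left hge
          have hui : u i = 1 := if_pos hge
          have hzi : z i = (x i - a) / (1 - a) := by
            show (max (x i) a - a) / (1 - a) = _
            rw [hmax]
          rw [hui, hzi]
          field_simp
          ring
      -- card bound for z
      have hsub : (F.image z).filter (fun v => v ≠ 0 ∧ v ≠ 1) ⊆
          (W.erase a).image (fun v => (v - a) / (1 - a)) := by
        intro w hw
        simp only [Finset.mem_filter, Finset.mem_image] at hw
        obtain ⟨⟨i, hi, hwz⟩, hw0, hw1⟩ := hw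
        have hge : a ≤ x i := by
          rcases hmin i hi with h0 | hge
          · exfalso
            apply hw0
            rw [← hwz]
            have hmax : max (x i) a = a := max_eq_right (by rw [h0]; exact le_of_lt ha0')
            simp [hz, hmax]
          · exact hge
        have hmax : max (x i) a = x i := max_eq_left hge
        have hwz' : w = (x i - a) / (1 - a) := by rw [← hwz]; simp [hz, hmax]
        have hxa : x i ≠ a := by
          intro h
          apply hw0
          rw [hwz', h]
          simp
        have hx1 : x i ≠ 1 := by
          intro h
          apply hw1
          rw [hwz', h]
          field_simp
        have hx0 : x i ≠ 0 := by
          intro h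
          rw [h] at hge
          linarith
        refine Finset.mem_image.mpr ⟨x i, ?_, hwz'.symm⟩
        refine Finset.mem_erase.mpr ⟨hxa, ?_⟩
        simp only [hW, Finset.mem_filter, Finset.mem_image]
        exact ⟨⟨i, hi, rfl⟩, hx0, hx1⟩
      have hcard' : ((F.image z).filter (fun v => v ≠ 0 ∧ v ≠ 1)).card ≤ n := by
        calc ((F.image z).filter (fun v => v ≠ 0 ∧ v ≠ 1)).card
            ≤ ((W.erase a).image (fun v => (v - a) / (1 - a))).card :=
              Finset.card_le_card hsub
          _ ≤ (W.erase a).card := Finset.card_image_le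
          _ = W.card - 1 := Finset.card_erase_of_mem haW
          _ ≤ n := by omega
      obtain ⟨y', hy'mem, hy'⟩ := ih z hzIcc hzmono F hcard'
      have h1ann : (0:ℝ) ≤ 1 - a := le_of_lt h1a
      have hmem : a • u + (1 - a) • y' ∈ convexHull ℝ
          {x : Γ → ℝ | (∀ i, x i = 0 ∨ x i = 1) ∧ ∀ i j : Γ, i < j → x i ≤ x j} :=
        (convex_convexHull ℝ _)
          (subset_convexHull ℝ _ huS) hy'mem (le_of_lt ha0') h1ann (by ring)
      refine ⟨a • u + (1 - a) • y', hmem, ?_⟩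
      intro i hi
      have heval : (a • u + (1 - a) • y') i = a * u i + (1 - a) * y' i := rfl
      rw [heval, hy' i hi]
      exact hcomb i hi

theorem stmt6 {Γ : Type*} [LinearOrder Γ] [WellFoundedLT Γ] :
    closure (convexHull ℝ
      {x : Γ → ℝ | (∀ i, x i = 0 ∨ x i = 1) ∧ ∀ i j : Γ, i < j → x i ≤ x j}) =
    {x : Γ → ℝ | (∀ i, x i ∈ Set.Icc (0:ℝ) 1) ∧ ∀ i j : Γ, i < j → x i ≤ x j} := by
  set S := {x : Γ → ℝ | (∀ i, x i = 0 ∨ x i = 1) ∧ ∀ i j : Γ, i < j → x i ≤ x j}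
  set T := {x : Γ → ℝ | (∀ i, x i ∈ Set.Icc (0:ℝ) 1) ∧ ∀ i j : Γ, i < j → x i ≤ x j}
  have hST : S ⊆ T := by
    rintro x ⟨h01, hmono⟩
    refine ⟨fun i => ?_, hmono⟩
    rcases h01 i with h | h <;> rw [h] <;> norm_num
  have hTconv : Convex ℝ T := by
    rintro x ⟨hx1, hx2⟩ y ⟨hy1, hy2⟩ s t hs ht hst
    constructor
    · intro i
      have h1 := hx1 i
      have h2 := hy1 i
      simp only [Set.mem_Icc] at h1 h2 ⊢
      constructor
      · have := add_nonneg (mul_nonneg hs h1.1) (mul_nonneg ht h2.1)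
        simpa using this
      · have : s * x i + t * y i ≤ s * 1 + t * 1 :=
          add_le_add (mul_le_mul_of_nonneg_left h1.2 hs)
            (mul_le_mul_of_nonneg_left h2.2 ht)
        simpa [hst] using this
    · intro i j hij
      have := add_le_add (mul_le_mul_of_nonneg_left (hx2 i j hij) hs)
        (mul_le_mul_of_nonneg_left (hy2 i j hij) ht)
      simpa using this
  have hTclosed : IsClosed T := by
    have hTeq : T = (⋂ i, (fun x : Γ → ℝ => x i) ⁻¹' Set.Icc (0:ℝ) 1) ∩
        (⋂ i, ⋂ j, ⋂ (_ : i < j), {x : Γ → ℝ | x i ≤ x j}) := by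
      ext x
      simp only [T, Set.mem_setOf_eq, Set.mem_inter_iff, Set.mem_iInter,
        Set.mem_preimage]
    rw [hTeq]
    refine IsClosed.inter (isClosed_iInter fun i => ?_)
      (isClosed_iInter fun i => isClosed_iInter fun j => isClosed_iInter fun _ => ?_)
    · exact isClosed_Icc.preimage (continuous_apply i)
    · exact isClosed_le (continuous_apply i) (continuous_apply j)
  apply Set.Subset.antisymm
  · exact closure_minimal (convexHull_min hST hTconv) hTclosed
  · rintro x ⟨hx1, hx2⟩
    rw [mem_closure_iff]
    intro o ho hxo
    obtain ⟨I, u, h1, h2⟩ := isOpen_pi_iff.mp ho x hxo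
    obtain ⟨y, hymem, hy⟩ := key_lemma ((I.image x).filter (fun v => v ≠ 0 ∧ v ≠ 1)).card
      x hx1 hx2 I le_rfl
    refine ⟨y, h2 ?_, hymem⟩
    intro i hi
    rw [hy i hi]
    exact (h1 i hi).2
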